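/- For p ∈ 𝒫, q ∈ {1,…,Q} and k ∈ {1,…,N}, define [D_q(p)]_k = (1/|H_qq(k)|² + p_q(k)/Γ_q + Σ_{r≠q} (|H_rq(k)|²/|H_qq(k)|²)·p_r(k))^{-2}, and set ε_q = min_{p ∈ 𝒫} (min_k [D_q(p)]_k / max_k [D_q(p)]_k) ∈ (0,1]. If for every q one has Σ_{r≠q} max_{k∈{1,…,N}} (|H_rq(k)|²/|H_qq(k)|²) < ε_q, then there exist β > 0 and δ ∈ [0,1) such that for every p ∈ 𝒫 and every q: max_k |1 − β·[D_q(p)]_k| + β·(max_k [D_q(p)]_k)·Σ_{r≠q} max_k (|H_rq(k)|²/|H_qq(k)|²) ≤ δ. -/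

import Mathlib

open Finset
open scoped Classical

noncomputable section

/-- Squared Euclidean distance between two vectors of `ℝ^N`. -/
def dsq {N : ℕ} (x y : Fin N → ℝ) : ℝ := ∑ k, (x k - y k) ^ 2

/-- The admissible strategy set with per-carrier caps `pmax`. -/
def stratSet {N : ℕ} (pmax : Fin N → ℝ) : Set (Fin N → ℝ) :=
  {p | (1 / (N : ℝ)) * ∑ k, p k = 1 ∧ ∀ k, 0 ≤ p k ∧ p k ≤ pmax k}

/-- `x` is a Euclidean projection of `z` onto `S` (a minimizer of the Euclidean distance). -/
def IsProjOn {N : ℕ} (S : Set (Fin N → ℝ)) (z x : Fin N → ℝ) : Prop :=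
  x ∈ S ∧ ∀ y ∈ S, dsq x z ≤ dsq y z

/-- The interference-plus-noise-to-signal vector `insr_q(p_{-q})`
(it only depends on the components `p r` for `r ≠ q`). -/
def insr {N Q : ℕ} (H : Fin Q → Fin Q → Fin N → ℝ) (Γ : Fin Q → ℝ)
    (q : Fin Q) (p : Fin Q → Fin N → ℝ) : Fin N → ℝ :=
  fun k => Γ q * (1 + ∑ r ∈ Finset.univ.erase q, H r q k * p r k) / H q q k

/-- `WF` is a waterfilling operator: whenever the other users' strategies are feasible,
`WF q p` is the Euclidean projection of `-insr_q(p_{-q})` onto user `q`'s strategy set. -/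
def IsWF {N Q : ℕ} (H : Fin Q → Fin Q → Fin N → ℝ) (Γ : Fin Q → ℝ)
    (pmax : Fin Q → Fin N → ℝ)
    (WF : Fin Q → (Fin Q → Fin N → ℝ) → Fin N → ℝ) : Prop :=
  ∀ q (p : Fin Q → Fin N → ℝ), (∀ r, r ≠ q → p r ∈ stratSet (pmax r)) →
    IsProjOn (stratSet (pmax q)) (fun k => -insr H Γ q p k) (WF q p)

/-- The rate `R_q(p)` of user `q`. -/
def rate {N Q : ℕ} (H : Fin Q → Fin Q → Fin N → ℝ) (Γ : Fin Q → ℝ)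
    (q : Fin Q) (p : Fin Q → Fin N → ℝ) : ℝ :=
  (1 / (N : ℝ)) * ∑ k, Real.log (1 + H q q k * p q k /
      (Γ q * (1 + ∑ r ∈ Finset.univ.erase q, H r q k * p r k)))

/-- `pstar` is a Nash equilibrium of the rate game `𝒢`. -/
def IsNE {N Q : ℕ} (H : Fin Q → Fin Q → Fin N → ℝ) (Γ : Fin Q → ℝ)
    (pmax : Fin Q → Fin N → ℝ) (pstar : Fin Q → Fin N → ℝ) : Prop :=
  (∀ q, pstar q ∈ stratSet (pmax q)) ∧
    ∀ q, ∀ x ∈ stratSet (pmax q),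
      rate H Γ q (Function.update pstar q x) ≤ rate H Γ q pstar

/-- The set `D_q` of carriers that user `q` may use in some best response. -/
def Dset {N Q : ℕ} (pmax : Fin Q → Fin N → ℝ)
    (WF : Fin Q → (Fin Q → Fin N → ℝ) → Fin N → ℝ) (q : Fin Q) : Set (Fin N) :=
  {k | ∃ p : Fin Q → Fin N → ℝ,
    (∀ r, r ≠ q → p r ∈ stratSet (pmax r)) ∧ WF q p k ≠ 0}

/-- `max_{k ∈ D_q ∩ D_r} |H_rq(k)|² / |H_qq(k)|²`, with the convention that it is `0`
when `D_q ∩ D_r = ∅` (via `Real.sSup_empty`). -/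
def maxRatio {N Q : ℕ} (H : Fin Q → Fin Q → Fin N → ℝ) (pmax : Fin Q → Fin N → ℝ)
    (WF : Fin Q → (Fin Q → Fin N → ℝ) → Fin N → ℝ) (q r : Fin Q) : ℝ :=
  sSup {x : ℝ | ∃ k : Fin N,
    (k ∈ Dset pmax WF q ∧ k ∈ Dset pmax WF r) ∧ x = H r q k / H q q k}

/-- The matrix `H^max`. -/
def Hmax {N Q : ℕ} (H : Fin Q → Fin Q → Fin N → ℝ) (Γ : Fin Q → ℝ)
    (pmax : Fin Q → Fin N → ℝ)
    (WF : Fin Q → (Fin Q → Fin N → ℝ) → Fin N → ℝ) : Matrix (Fin Q) (Fin Q) ℝ :=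
  Matrix.of fun q r => if q = r then 0 else Γ q * maxRatio H pmax WF q r

/-- The matrix `H(k)`. -/
def Hmat {N Q : ℕ} (H : Fin Q → Fin Q → Fin N → ℝ) (Γ : Fin Q → ℝ)
    (pmax : Fin Q → Fin N → ℝ)
    (WF : Fin Q → (Fin Q → Fin N → ℝ) → Fin N → ℝ) (k : Fin N) :
    Matrix (Fin Q) (Fin Q) ℝ :=
  Matrix.of fun q r =>
    if q ≠ r ∧ k ∈ Dset pmax WF q ∧ k ∈ Dset pmax WF r then
      Γ q * H r q k / H q q k
    else 0

/-- The spectral radius of a real square matrix: the maximum modulus of its complex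
eigenvalues (the roots of its characteristic polynomial over `ℂ`). -/
def specRad {n : ℕ} (A : Matrix (Fin n) (Fin n) ℝ) : ℝ :=
  sSup {x : ℝ | ∃ μ : ℂ,
    ((A.map (fun a => (a : ℂ))).charpoly).IsRoot μ ∧ x = ‖μ‖}

/-- The spectral norm `‖A‖₂ = ρ(AᵀA)^{1/2}` of a real square matrix. -/
def specNorm {n : ℕ} (A : Matrix (Fin n) (Fin n) ℝ) : ℝ :=
  Real.sqrt (specRad (A.transpose * A))

/-- Euclidean distance between strategy profiles, viewed as vectors of `ℝ^{QN}`. -/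
def profDist {N Q : ℕ} (p p' : Fin Q → Fin N → ℝ) : ℝ :=
  Real.sqrt (∑ q, ∑ k, (p q k - p' q k) ^ 2)

/-- The effective strategy set `𝒫_q^eff`. -/
def effSet {N Q : ℕ} (pmax : Fin Q → Fin N → ℝ)
    (WF : Fin Q → (Fin Q → Fin N → ℝ) → Fin N → ℝ) (q : Fin Q) : Set (Fin N → ℝ) :=
  {p | p ∈ stratSet (pmax q) ∧ ∀ k, k ∉ Dset pmax WF q → p k = 0}

/-- The gradient `∇_q R_q(p)` of the rate of user `q` with respect to its own powers. -/
def gradR {N Q : ℕ} (H : Fin Q → Fin Q → Fin N → ℝ) (Γ : Fin Q → ℝ)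
    (q : Fin Q) (p : Fin Q → Fin N → ℝ) : Fin N → ℝ :=
  fun k => (1 / (N : ℝ)) * H q q k /
    (Γ q * (1 + ∑ r ∈ Finset.univ.erase q, H r q k * p r k) + H q q k * p q k)

/-- `x` is a projection of `z` onto `S` with respect to the quadratic form of the
(symmetric positive definite) matrix `G`, i.e. a minimizer of `(x-z)ᵀ G (x-z)` over `S`. -/
def IsGProj {N : ℕ} (G : Matrix (Fin N) (Fin N) ℝ) (S : Set (Fin N → ℝ))
    (z x : Fin N → ℝ) : Prop :=
  x ∈ S ∧ ∀ y ∈ S,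
    dotProduct (fun i => x i - z i) (G.mulVec (fun i => x i - z i)) ≤
      dotProduct (fun i => y i - z i) (G.mulVec (fun i => y i - z i))

/-- The diagonal entries of the matrix `D_q(p)`. -/
def Dqp {N Q : ℕ} (H : Fin Q → Fin Q → Fin N → ℝ) (Γ : Fin Q → ℝ)
    (q : Fin Q) (p : Fin Q → Fin N → ℝ) (k : Fin N) : ℝ :=
  ((1 / H q q k + p q k / Γ q +
    ∑ r ∈ Finset.univ.erase q, (H r q k / H q q k) * p r k) ^ 2)⁻¹

/-- Entries of a feasible strategy are bounded by `N`. -/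
lemma strat_entry_le {N : ℕ} {pmax p : Fin N → ℝ} (hN : 1 ≤ N)
    (h : p ∈ stratSet pmax) (k : Fin N) : p k ≤ N := by
  obtain ⟨hs, hb⟩ := h
  have hNR : (0 : ℝ) < N := by exact_mod_cast hN
  have hsum : ∑ j, p j = (N : ℝ) := by
    have h' := hs
    field_simp at h'
    linarith
  calc p k ≤ ∑ j, p j :=
        Finset.single_le_sum (fun j _ => (hb j).1) (Finset.mem_univ k)
    _ = N := hsum

/-- If the total normalized crosstalk of every user is below `ε_q`, then
there are a stepsize `β > 0` and a modulus `δ ∈ [0,1)` making the gradient projection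
contraction estimate hold uniformly on the strategy space. -/
theorem statement19 {N Q : ℕ} (hN : 1 ≤ N) (hQ : 2 ≤ Q)
    (H : Fin Q → Fin Q → Fin N → ℝ) (Γ : Fin Q → ℝ) (pmax : Fin Q → Fin N → ℝ)
    (hH : ∀ r q k, 0 ≤ H r q k) (hHqq : ∀ q k, 0 < H q q k)
    (hΓ : ∀ q, 0 < Γ q) (hpmax : ∀ q k, 0 ≤ pmax q k)
    (hcap : ∀ q, 1 < (1 / (N : ℝ)) * ∑ k, pmax q k)
    (hsmall : ∀ q : Fin Q,
      ∑ r ∈ Finset.univ.erase q, sSup (Set.range fun k => H r q k / H q q k) <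
        sInf {x : ℝ | ∃ p : Fin Q → Fin N → ℝ,
          (∀ q', p q' ∈ stratSet (pmax q')) ∧
          x = sInf (Set.range fun k => Dqp H Γ q p k) /
              sSup (Set.range fun k => Dqp H Γ q p k)}) :
    ∃ β δ : ℝ, 0 < β ∧ 0 ≤ δ ∧ δ < 1 ∧
      ∀ p : Fin Q → Fin N → ℝ, (∀ q', p q' ∈ stratSet (pmax q')) →
        ∀ q, sSup (Set.range fun k => |1 - β * Dqp H Γ q p k|) +
          β * sSup (Set.range fun k => Dqp H Γ q p k) *
            ∑ r ∈ Finset.univ.erase q, sSup (Set.range fun k => H r q k / H q q k)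
          ≤ δ := by

  have hNR : (0:ℝ) < N := by exact_mod_cast hN
  haveI instN : Nonempty (Fin N) := ⟨⟨0, hN⟩⟩
  haveI instQ : Nonempty (Fin Q) := ⟨⟨0, by omega⟩⟩
  have q0 : Fin Q := ⟨0, by omega⟩
  have k0 : Fin N := ⟨0, hN⟩
  have hrat : ∀ r q k, 0 ≤ H r q k / H q q k := fun r q k =>
    div_nonneg (hH r q k) (hHqq q k).le
  set α : Fin Q → ℝ := fun q =>
    ∑ r ∈ Finset.univ.erase q, sSup (Set.range fun k => H r q k / H q q k) with hαdef
  set ε : Fin Q → ℝ := fun q => sInf {x : ℝ | ∃ p : Fin Q → Fin N → ℝ,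
      (∀ q', p q' ∈ stratSet (pmax q')) ∧
      x = sInf (Set.range fun k => Dqp H Γ q p k) /
          sSup (Set.range fun k => Dqp H Γ q p k)} with hεdef
  have hsmall' : ∀ q, α q < ε q := by
    intro q
    simp only [hαdef, hεdef]
    exact hsmall q
  have hα0 : ∀ q, 0 ≤ α q := by
    intro q
    simp only [hαdef]
    refine Finset.sum_nonneg fun r _ => ?_
    exact le_trans (hrat r q k0) (le_csSup (Set.finite_range _).bddAbove ⟨k0, rfl⟩)
  -- uniform bounds on the entries of D_q(p)
  set C : ℝ := Finset.univ.sup' Finset.univ_nonempty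
      (fun qk : Fin Q × Fin N => (H qk.1 qk.1 qk.2) ^ 2) with hCdef
  have hCge : ∀ q k, (H q q k) ^ 2 ≤ C := fun q k =>
    Finset.le_sup' (fun qk : Fin Q × Fin N => (H qk.1 qk.1 qk.2) ^ 2)
      (Finset.mem_univ (q, k))
  have hCpos : 0 < C := lt_of_lt_of_le (by have := hHqq q0 k0; positivity) (hCge q0 k0)
  set Umax : ℝ := Finset.univ.sup' Finset.univ_nonempty
      (fun qk : Fin Q × Fin N => 1 / H qk.1 qk.1 qk.2 + N / Γ qk.1 +
        ∑ r ∈ Finset.univ.erase qk.1, (H r qk.1 qk.2 / H qk.1 qk.1 qk.2) * N) with hUdef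
  have hUge : ∀ q k, 1 / H q q k + N / Γ q +
      ∑ r ∈ Finset.univ.erase q, (H r q k / H q q k) * N ≤ Umax := fun q k =>
    Finset.le_sup' (fun qk : Fin Q × Fin N => 1 / H qk.1 qk.1 qk.2 + N / Γ qk.1 +
        ∑ r ∈ Finset.univ.erase qk.1, (H r qk.1 qk.2 / H qk.1 qk.1 qk.2) * N)
      (Finset.mem_univ (q, k))
  have hUpos : 0 < Umax := by
    refine lt_of_lt_of_le ?_ (hUge q0 k0)
    have h1 : 0 < 1 / H q0 q0 k0 := by have := hHqq q0 k0; positivity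
    have h2 : 0 ≤ (N:ℝ) / Γ q0 := div_nonneg hNR.le (hΓ q0).le
    have h3 : 0 ≤ ∑ r ∈ Finset.univ.erase q0, (H r q0 k0 / H q0 q0 k0) * N :=
      Finset.sum_nonneg fun r _ => mul_nonneg (hrat r q0 k0) hNR.le
    linarith
  set L : ℝ := (Umax ^ 2)⁻¹ with hLdef
  have hLpos : 0 < L := by positivity
  set β : ℝ := (1 + C)⁻¹ with hβdef
  have hβpos : 0 < β := by positivity
  have hβ1 : β * (1 + C) = 1 := inv_mul_cancel₀ (by positivity)
  have hinv : ∀ a b : ℝ, 0 < a → a ≤ b → (b ^ 2)⁻¹ ≤ (a ^ 2)⁻¹ := by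
    intro a b ha hab
    have h1 : 0 < a ^ 2 := by positivity
    have h2 : a ^ 2 ≤ b ^ 2 := by nlinarith
    exact inv_anti₀ h1 h2
  -- pointwise bounds on Dqp for feasible p
  have hden : ∀ (p : Fin Q → Fin N → ℝ), (∀ q', p q' ∈ stratSet (pmax q')) →
      ∀ q k, 0 < 1 / H q q k ∧
        0 ≤ p q k / Γ q ∧
        0 ≤ ∑ r ∈ Finset.univ.erase q, (H r q k / H q q k) * p r k := by
    intro p hp q k
    refine ⟨by have := hHqq q k; positivity,
      div_nonneg ((hp q).2 k).1 (hΓ q).le,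
      Finset.sum_nonneg fun r _ => mul_nonneg (hrat r q k) ((hp r).2 k).1⟩
  have hDleC : ∀ (p : Fin Q → Fin N → ℝ), (∀ q', p q' ∈ stratSet (pmax q')) →
      ∀ q k, Dqp H Γ q p k ≤ C := by
    intro p hp q k
    obtain ⟨h1, h2, h3⟩ := hden p hp q k
    have key : Dqp H Γ q p k ≤ ((1 / H q q k) ^ 2)⁻¹ := by
      unfold Dqp
      exact hinv _ _ h1 (by linarith)
    have heq : ((1 / H q q k) ^ 2)⁻¹ = (H q q k) ^ 2 := by
      rw [one_div, inv_pow, inv_inv]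
    exact key.trans (heq ▸ hCge q k)
  have hDgeL : ∀ (p : Fin Q → Fin N → ℝ), (∀ q', p q' ∈ stratSet (pmax q')) →
      ∀ q k, L ≤ Dqp H Γ q p k := by
    intro p hp q k
    obtain ⟨h1, h2, h3⟩ := hden p hp q k
    have hb : ∀ r, p r k ≤ N := fun r => strat_entry_le hN (hp r) k
    have hdU : 1 / H q q k + p q k / Γ q +
        ∑ r ∈ Finset.univ.erase q, (H r q k / H q q k) * p r k ≤ Umax := by
      refine le_trans ?_ (hUge q k)
      have hc2 : p q k / Γ q ≤ N / Γ q := by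
        have hg := hΓ q
        gcongr
        exact hb q
      have hc3 : ∑ r ∈ Finset.univ.erase q, (H r q k / H q q k) * p r k ≤
          ∑ r ∈ Finset.univ.erase q, (H r q k / H q q k) * N :=
        Finset.sum_le_sum fun r _ => mul_le_mul_of_nonneg_left (hb r) (hrat r q k)
      linarith
    unfold Dqp
    rw [hLdef]
    exact hinv _ _ (by linarith) hdU
  -- the uniform contraction constant
  set c : ℝ := Finset.univ.inf' Finset.univ_nonempty (fun q => L * (ε q - α q)) with hcdef
  have hcle : ∀ q, c ≤ L * (ε q - α q) := fun q =>
    Finset.inf'_le _ (Finset.mem_univ q)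
  have hcpos : 0 < c := by
    rw [hcdef, Finset.lt_inf'_iff]
    intro b _
    exact mul_pos hLpos (sub_pos.2 (hsmall' b))
  refine ⟨β, max (1 - β * c) 0, hβpos, le_max_right _ _, ?_, ?_⟩
  · exact max_lt (by nlinarith) one_pos
  · intro p hp q
    set M : ℝ := sSup (Set.range fun k => Dqp H Γ q p k) with hMdef
    set m : ℝ := sInf (Set.range fun k => Dqp H Γ q p k) with hmdef
    have hMk : ∀ k, Dqp H Γ q p k ≤ M := fun k =>
      le_csSup (Set.finite_range _).bddAbove ⟨k, rfl⟩
    have hmk : ∀ k, m ≤ Dqp H Γ q p k := fun k =>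
      csInf_le (Set.finite_range _).bddBelow ⟨k, rfl⟩
    have hLm : L ≤ m := le_csInf ⟨_, ⟨k0, rfl⟩⟩ (by
      rintro x ⟨k, rfl⟩; exact hDgeL p hp q k)
    have hLM : L ≤ M := hLm.trans ((hmk k0).trans (hMk k0))
    have hMpos : 0 < M := lt_of_lt_of_le hLpos hLM
    have hεq : ε q ≤ m / M := by
      simp only [hεdef]
      refine csInf_le ⟨0, ?_⟩ ⟨p, hp, by rw [hMdef, hmdef]⟩
      rintro x ⟨p', hp', rfl⟩
      have hD0 : ∀ k, 0 ≤ Dqp H Γ q p' k := by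
        intro k; unfold Dqp; positivity
      have h1 : 0 ≤ sInf (Set.range fun k => Dqp H Γ q p' k) :=
        le_csInf ⟨_, ⟨k0, rfl⟩⟩ (by rintro x ⟨k, rfl⟩; exact hD0 k)
      have h2 : 0 ≤ sSup (Set.range fun k => Dqp H Γ q p' k) :=
        (hD0 k0).trans (le_csSup (Set.finite_range _).bddAbove ⟨k0, rfl⟩)
      exact div_nonneg h1 h2
    have hMε : M * ε q ≤ m := by
      have h := hεq
      rw [le_div_iff₀ hMpos] at h
      have h2 : M * ε q = ε q * M := by ring
      linarith
    -- the crosstalk sum in the goal is α q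
    have hAα : ∑ r ∈ Finset.univ.erase q,
        sSup (Set.range fun k => H r q k / H q q k) = α q := by
      simp only [hαdef]
    rw [hAα]
    have hkey : c ≤ m - M * α q := by
      have h1 := hcle q
      have h2 : L * (ε q - α q) ≤ M * (ε q - α q) :=
        mul_le_mul_of_nonneg_right hLM (sub_nonneg.2 (hsmall' q).le)
      have h3 : M * (ε q - α q) = M * ε q - M * α q := by ring
      linarith
    have hsup : sSup (Set.range fun k => |1 - β * Dqp H Γ q p k|) ≤ 1 - β * m := by
      refine csSup_le ⟨_, ⟨k0, rfl⟩⟩ ?_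
      rintro x ⟨k, rfl⟩
      show |1 - β * Dqp H Γ q p k| ≤ 1 - β * m
      have hD1 : β * Dqp H Γ q p k ≤ 1 := by
        have h := hDleC p hp q k
        have : β * Dqp H Γ q p k ≤ β * (1 + C) :=
          mul_le_mul_of_nonneg_left (by linarith) hβpos.le
        linarith
      have h3 : β * m ≤ β * Dqp H Γ q p k :=
        mul_le_mul_of_nonneg_left (hmk k) hβpos.le
      rw [abs_of_nonneg (by linarith)]
      linarith
    refine le_trans ?_ (le_max_left _ _)
    have h4 : β * c ≤ β * (m - M * α q) := mul_le_mul_of_nonneg_left hkey hβpos.le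
    have h5 : β * (m - M * α q) = β * m - β * M * α q := by ring
    linarith
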